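/- If a and b are positive integers such that 2a^4 + 2b^4 is a perfect square and 2a^4 - 2b^4 is a perfect square, then a = b. -/
import Mathlib

theorem stmt_6 (a b : ℤ) (ha : 0 < a) (hb : 0 < b)
    (h1 : ∃ x : ℤ, 2 * a ^ 4 + 2 * b ^ 4 = x ^ 2)
    (h2 : ∃ y : ℤ, 2 * a ^ 4 - 2 * b ^ 4 = y ^ 2) :
    a = b := by
  obtain ⟨x, hx⟩ := h1
  obtain ⟨y, hy⟩ := h2
  -- x and y are even
  have hxe : Even x := by
    have : Even (x ^ 2) := ⟨a ^ 4 + b ^ 4, by linarith⟩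
    exact (Int.even_pow.mp this).1
  have hye : Even y := by
    have : Even (y ^ 2) := ⟨a ^ 4 - b ^ 4, by linarith⟩
    exact (Int.even_pow.mp this).1
  obtain ⟨u, hu⟩ := hxe
  obtain ⟨v, hv⟩ := hye
  have hu2 : a ^ 4 + b ^ 4 = 2 * u ^ 2 := by subst hu; ring_nf; ring_nf at hx; linarith
  have hv2 : a ^ 4 - b ^ 4 = 2 * v ^ 2 := by subst hv; ring_nf; ring_nf at hy; linarith
  have ha4 : a ^ 4 = u ^ 2 + v ^ 2 := by linarith
  have hb4 : b ^ 4 = u ^ 2 - v ^ 2 := by linarith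
  have hv0 : v = 0 := by
    by_contra hv0
    have hab : a * b ≠ 0 := mul_ne_zero ha.ne' hb.ne'
    exact not_fermat_42 hab hv0 (by nlinarith : (a * b) ^ 4 + v ^ 4 = (u ^ 2) ^ 2)
  have : a ^ 4 = b ^ 4 := by rw [ha4, hb4, hv0]; ring
  nlinarith [pow_pos ha 3, pow_pos hb 3, pow_pos ha 2, pow_pos hb 2, sq_nonneg (a - b), sq_nonneg (a + b), mul_pos ha hb]
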